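/- Restriction to a sub-wedge: under the hypotheses of the wedge confinement lemma, additionally let w₁, w₂ be points of P seeing a, b₁, b₂ that subtend the maximal angle at a among such points, defining a sub-wedge W of U with apex a. Then for every point v' ∈ P that sees b₁ and b₂: v' sees a if and only if v' ∈ W. -/

import Mathlib

open Bornology in
/-- A simple polygon: the closed region bounded by a simple closed polygonal curve,
given by its cyclically ordered vertices. `carrier` consists of the polygonal curve
together with all bounded connected components of its complement. -/
structure SimplePolygon where
  n : ℕ
  three_le : 3 ≤ n
  vtx : Fin n → ℝ × ℝ
  inj : Function.Injective vtx
  adj : ∀ i : Fin n,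
    segment ℝ (vtx i) (vtx (finRotate n i)) ∩
      segment ℝ (vtx (finRotate n i)) (vtx (finRotate n (finRotate n i)))
    = {vtx (finRotate n i)}
  nonadj : ∀ i j : Fin n, j ≠ i → j ≠ finRotate n i → i ≠ finRotate n j →
    segment ℝ (vtx i) (vtx (finRotate n i)) ∩ segment ℝ (vtx j) (vtx (finRotate n j)) = ∅
  carrier : Set (ℝ × ℝ)
  carrier_def : carrier =
    {x : ℝ × ℝ |
      IsBounded (connectedComponentIn (⋃ i : Fin n, segment ℝ (vtx i) (vtx (finRotate n i)))ᶜ x)}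

/-- The visibility region of a point `v` in a simple polygon `P`. -/
def vis (P : SimplePolygon) (v : ℝ × ℝ) : Set (ℝ × ℝ) :=
  {x ∈ P.carrier | segment ℝ x v ⊆ P.carrier}

/-- The planar cross product. -/
def cross (p q : ℝ × ℝ) : ℝ := p.1 * q.2 - p.2 * q.1


lemma cramer (u n z : ℝ × ℝ) (hc : cross u n ≠ 0) :
    z = (cross z n / cross u n) • u + (cross u z / cross u n) • n := by
  have h : cross u n • z = cross z n • u + cross u z • n := by
    simp only [cross, Prod.smul_def, smul_eq_mul]
    ext <;> simp <;> ring
  ext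
  · have := congrArg Prod.fst h
    simp only [Prod.smul_def, smul_eq_mul, Prod.fst_add] at this ⊢
    field_simp; linarith [this]
  · have := congrArg Prod.snd h
    simp only [Prod.smul_def, smul_eq_mul, Prod.snd_add] at this ⊢
    field_simp; linarith [this]

lemma abs_cross_le (p q : ℝ × ℝ) : |cross p q| ≤ 2 * ‖p‖ * ‖q‖ := by
  have h1 : |p.1| ≤ ‖p‖ := by
    rw [Prod.norm_def]; exact le_max_of_le_left (le_of_eq (Real.norm_eq_abs _).symm)
  have h2 : |p.2| ≤ ‖p‖ := by
    rw [Prod.norm_def]; exact le_max_of_le_right (le_of_eq (Real.norm_eq_abs _).symm)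
  have h3 : |q.1| ≤ ‖q‖ := by
    rw [Prod.norm_def]; exact le_max_of_le_left (le_of_eq (Real.norm_eq_abs _).symm)
  have h4 : |q.2| ≤ ‖q‖ := by
    rw [Prod.norm_def]; exact le_max_of_le_right (le_of_eq (Real.norm_eq_abs _).symm)
  calc |cross p q| ≤ |p.1| * |q.2| + |p.2| * |q.1| := by
        rw [cross]; exact (abs_sub _ _).trans (by rw [abs_mul, abs_mul])
    _ ≤ 2 * ‖p‖ * ‖q‖ := by nlinarith [abs_nonneg p.1, abs_nonneg p.2, abs_nonneg q.1, abs_nonneg q.2, norm_nonneg p, norm_nonneg q]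

/-- Ball coordinates: points near `y` decompose in the (affine) frame `y + ℝu + ℝn`
with small coefficients given by explicit cross-product formulas. -/
lemma ballcoord (y u n : ℝ × ℝ) (hc : cross u n ≠ 0) (ε : ℝ) (hε : 0 < ε) :
    ∃ δ > 0, ∀ z : ℝ × ℝ, dist z y < δ →
      z = y + (cross (z - y) n / cross u n) • u + (cross u (z - y) / cross u n) • n ∧
      |cross (z - y) n / cross u n| < ε ∧ |cross u (z - y) / cross u n| < ε := by
  refine ⟨ε * |cross u n| / (2 * (‖u‖ + ‖n‖) + 1), by positivity, fun z hz => ?_⟩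
  have hd : dist z y = ‖z - y‖ := dist_eq_norm _ _
  rw [hd] at hz
  have hnz : ‖z - y‖ < ε * |cross u n| / (2 * (‖u‖ + ‖n‖) + 1) := hz
  have hden : (0:ℝ) < 2 * (‖u‖ + ‖n‖) + 1 := by positivity
  rw [lt_div_iff₀ hden] at hnz
  have habs : (0:ℝ) < |cross u n| := abs_pos.mpr hc
  refine ⟨?_, ?_, ?_⟩
  · have := cramer u n (z - y) hc
    have h2 : y + ((cross (z-y) n / cross u n) • u + (cross u (z-y) / cross u n) • n) = y + (z - y) := by
      rw [← this]
    rw [add_assoc]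
    rw [h2]; abel
  · have h1 : |cross (z - y) n| ≤ 2 * ‖z - y‖ * ‖n‖ := abs_cross_le _ _
    rw [abs_div]
    rw [div_lt_iff₀ habs]
    calc |cross (z-y) n| ≤ 2 * ‖z - y‖ * ‖n‖ := h1
      _ < ε * |cross u n| := by nlinarith [norm_nonneg (z-y), norm_nonneg n, norm_nonneg u, mul_nonneg (norm_nonneg (z-y)) (norm_nonneg n), mul_nonneg (norm_nonneg (z-y)) (norm_nonneg u)]
  · have h1 : |cross u (z - y)| ≤ 2 * ‖u‖ * ‖z - y‖ := abs_cross_le _ _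
    rw [abs_div]
    rw [div_lt_iff₀ habs]
    calc |cross u (z-y)| ≤ 2 * ‖u‖ * ‖z - y‖ := h1
      _ < ε * |cross u n| := by nlinarith [norm_nonneg (z-y), norm_nonneg n, norm_nonneg u, mul_nonneg (norm_nonneg (z-y)) (norm_nonneg n), mul_nonneg (norm_nonneg (z-y)) (norm_nonneg u)]

/-- Membership in a triangle hull from explicit coefficients. -/
lemma mem_tri (p q r z : ℝ × ℝ) (α β γ : ℝ) (hα : 0 ≤ α) (hβ : 0 ≤ β) (hγ : 0 ≤ γ)
    (hsum : α + β + γ = 1) (hz : z = α • p + β • q + γ • r) :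
    z ∈ convexHull ℝ ({p, q, r} : Set (ℝ × ℝ)) := by
  have hp : p ∈ convexHull ℝ ({p, q, r} : Set (ℝ × ℝ)) :=
    subset_convexHull ℝ _ (by simp)
  have hq : q ∈ convexHull ℝ ({p, q, r} : Set (ℝ × ℝ)) :=
    subset_convexHull ℝ _ (by simp)
  have hr : r ∈ convexHull ℝ ({p, q, r} : Set (ℝ × ℝ)) :=
    subset_convexHull ℝ _ (by simp)
  have hconv : Convex ℝ (convexHull ℝ ({p, q, r} : Set (ℝ × ℝ))) := convex_convexHull _ _
  rcases eq_or_lt_of_le (add_nonneg hβ hγ) with h0 | hpos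
  · -- β + γ = 0
    have hβ0 : β = 0 := by linarith [hγ, hβ]
    have hγ0 : γ = 0 := by linarith
    have : z = p := by rw [hz, hβ0, hγ0]; simp [show α = 1 by linarith]
    rw [this]; exact hp
  · set m := (β / (β + γ)) • q + (γ / (β + γ)) • r with hm
    have hmmem : m ∈ convexHull ℝ ({p, q, r} : Set (ℝ × ℝ)) := by
      have := hconv.segment_subset hq hr
      apply this
      exact ⟨β / (β + γ), γ / (β + γ), by positivity, by positivity, by field_simp, rfl⟩
    have hseg := hconv.segment_subset hp hmmem
    apply hseg
    refine ⟨α, β + γ, hα, le_of_lt hpos, by linarith, ?_⟩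
    rw [hz, hm, smul_add, smul_smul, smul_smul]
    rw [mul_div_cancel₀ _ (ne_of_gt hpos), mul_div_cancel₀ _ (ne_of_gt hpos), add_assoc]

/-- Triangle hull membership gives explicit coefficients. -/
lemma tri_coords (p q r z : ℝ × ℝ) (hz : z ∈ convexHull ℝ ({p, q, r} : Set (ℝ × ℝ))) :
    ∃ α β γ : ℝ, 0 ≤ α ∧ 0 ≤ β ∧ 0 ≤ γ ∧ α + β + γ = 1 ∧ z = α • p + β • q + γ • r := by
  rw [show ({p, q, r} : Set (ℝ × ℝ)) = insert p {q, r} by rfl,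
    convexHull_insert ⟨q, by simp⟩, convexHull_pair] at hz
  rw [mem_convexJoin] at hz
  obtain ⟨x, hx, w, hw, hzseg⟩ := hz
  rw [Set.mem_singleton_iff] at hx
  subst hx
  obtain ⟨b1, b2, hb1, hb2, hb12, hw⟩ := hw
  obtain ⟨c1, c2, hc1, hc2, hc12, hz⟩ := hzseg
  refine ⟨c1, c2 * b1, c2 * b2, hc1, mul_nonneg hc2 hb1, mul_nonneg hc2 hb2, by nlinarith, ?_⟩
  rw [← hz, ← hw]
  simp only [smul_add, smul_smul, add_assoc]

/-- One-sided cover: near a point `y` interior to the base segment `[e₁,e₂]`, every nearby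
point on the (weak) side of the apex `p` lies in the triangle `{e₁,e₂,p}`. -/
lemma one_sided_cover (y u p e₁ e₂ : ℝ × ℝ) (α₁ α₂ : ℝ)
    (he₁ : e₁ = y + α₁ • u) (he₂ : e₂ = y + α₂ • u) (hα₁ : α₁ < 0) (hα₂ : 0 < α₂)
    (hcp : cross u (p - y) ≠ 0) :
    ∃ δ > 0, ∀ z : ℝ × ℝ, dist z y < δ → 0 ≤ cross u (z - y) * cross u (p - y) →
      z ∈ convexHull ℝ ({e₁, e₂, p} : Set (ℝ × ℝ)) := by
  set n := p - y with hn
  set ε : ℝ := min (min (-α₁ / 2) (α₂ / 2)) (1 / 2) with hε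
  have hεpos : 0 < ε := by
    apply lt_min (lt_min (by linarith) (by linarith)) (by norm_num)
  obtain ⟨δ, hδpos, hδ⟩ := ballcoord y u n hcp ε hεpos
  refine ⟨δ, hδpos, fun z hz hside => ?_⟩
  obtain ⟨hrep, hσ, hτ⟩ := hδ z hz
  set σ := cross (z - y) n / cross u n with hσdef
  set τ := cross u (z - y) / cross u n with hτdef
  have hτ0 : 0 ≤ τ := by
    rw [hτdef]
    rw [div_nonneg_iff]
    rcases lt_or_gt_of_ne hcp with hneg | hpos
    · right; constructor
      · nlinarith
      · linarith
    · left; exact ⟨by nlinarith, le_of_lt hpos⟩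
  have hτlt : τ < 1 := lt_of_lt_of_le (lt_of_abs_lt hτ) (by
    calc ε ≤ 1/2 := min_le_right _ _
      _ ≤ 1 := by norm_num)
  -- z = (1-τ) • (y + (σ/(1-τ)) • u) + τ • p
  set σ' := σ / (1 - τ) with hσ'def
  have h1τ : 0 < 1 - τ := by linarith
  have hzeq : z = (1 - τ) • (y + σ' • u) + τ • p := by
    rw [hrep, hσ'def]
    have : p = y + n := by rw [hn]; abel
    rw [this]
    rw [smul_add, smul_add, smul_smul]
    rw [mul_div_cancel₀ _ (ne_of_gt h1τ)]
    have hy : (1 - τ) • y + τ • y = y := by rw [← add_smul]; simp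
    calc y + σ • u + τ • n = ((1 - τ) • y + τ • y) + σ • u + τ • n := by rw [hy]
      _ = (1 - τ) • y + σ • u + (τ • y + τ • n) := by abel
  -- the base point y + σ' • u lies in segment e₁ e₂
  have hσ'bound : α₁ ≤ σ' ∧ σ' ≤ α₂ := by
    have hτhalf : τ ≤ 1/2 := by
      have : ε ≤ 1/2 := min_le_right _ _
      linarith [lt_of_abs_lt hτ]
    have h2 : |σ'| ≤ 2 * |σ| := by
      rw [hσ'def, abs_div]
      rw [div_le_iff₀ (by rw [abs_of_pos h1τ]; linarith)]
      rw [abs_of_pos h1τ]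
      nlinarith [abs_nonneg σ, hτhalf]
    have hε1 : ε ≤ -α₁ / 2 := le_trans (min_le_left _ _) (min_le_left _ _)
    have hε2 : ε ≤ α₂ / 2 := le_trans (min_le_left _ _) (min_le_right _ _)
    constructor
    · nlinarith [neg_abs_le σ', abs_nonneg σ']
    · nlinarith [le_abs_self σ', abs_nonneg σ']
  have hbase : y + σ' • u ∈ segment ℝ e₁ e₂ := by
    rw [segment_eq_image']
    refine ⟨(σ' - α₁) / (α₂ - α₁), ⟨div_nonneg (by linarith [hσ'bound.1]) (by linarith), ?_⟩, ?_⟩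
    · rw [div_le_one (by linarith)]; linarith [hσ'bound.1, hσ'bound.2]
    · dsimp only
      rw [he₁, he₂]
      have heq : y + α₂ • u - (y + α₁ • u) = (α₂ - α₁) • u := by
        rw [sub_smul]; abel
      rw [heq, smul_smul, div_mul_cancel₀ _ (by intro h; simp only [sub_eq_zero] at h; linarith : α₂ - α₁ ≠ 0)]
      rw [add_assoc, ← add_smul]
      congr 2
      ring
  have hbase' : y + σ' • u ∈ convexHull ℝ ({e₁, e₂, p} : Set (ℝ × ℝ)) := by
    have : segment ℝ e₁ e₂ ⊆ convexHull ℝ ({e₁, e₂, p} : Set (ℝ × ℝ)) := by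
      apply (convex_convexHull ℝ _).segment_subset <;> exact subset_convexHull ℝ _ (by simp)
    exact this hbase
  have hp' : p ∈ convexHull ℝ ({e₁, e₂, p} : Set (ℝ × ℝ)) := subset_convexHull ℝ _ (by simp)
  exact (convex_convexHull ℝ _).segment_subset hbase' hp'
    ⟨1 - τ, τ, by linarith, hτ0, by ring, hzeq.symm⟩

/-- Two-sided interiorization: a point interior to both base segments, with apexes strictly
on opposite sides, is in the interior of the union of the two triangles. -/
lemma int_cover (y u pA pB e₁ e₂ f₁ f₂ : ℝ × ℝ) (α₁ α₂ β₁ β₂ : ℝ)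
    (he₁ : e₁ = y + α₁ • u) (he₂ : e₂ = y + α₂ • u) (hα₁ : α₁ < 0) (hα₂ : 0 < α₂)
    (hf₁ : f₁ = y + β₁ • u) (hf₂ : f₂ = y + β₂ • u) (hβ₁ : β₁ < 0) (hβ₂ : 0 < β₂)
    (hAB : cross u (pA - y) * cross u (pB - y) < 0) :
    y ∈ interior (convexHull ℝ ({e₁, e₂, pA} : Set (ℝ × ℝ)) ∪
                  convexHull ℝ ({f₁, f₂, pB} : Set (ℝ × ℝ))) := by
  have hcA : cross u (pA - y) ≠ 0 := by intro h; rw [h] at hAB; simp at hAB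
  have hcB : cross u (pB - y) ≠ 0 := by intro h; rw [h] at hAB; simp at hAB
  obtain ⟨δ₁, hδ₁pos, hδ₁⟩ := one_sided_cover y u pA e₁ e₂ α₁ α₂ he₁ he₂ hα₁ hα₂ hcA
  obtain ⟨δ₂, hδ₂pos, hδ₂⟩ := one_sided_cover y u pB f₁ f₂ β₁ β₂ hf₁ hf₂ hβ₁ hβ₂ hcB
  rw [mem_interior]
  refine ⟨Metric.ball y (min δ₁ δ₂), fun z hz => ?_, Metric.isOpen_ball,
    Metric.mem_ball_self (lt_min hδ₁pos hδ₂pos)⟩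
  rw [Metric.mem_ball] at hz
  rcases le_or_gt 0 (cross u (z - y) * cross u (pA - y)) with hside | hside
  · exact Or.inl (hδ₁ z (lt_of_lt_of_le hz (min_le_left _ _)) hside)
  · refine Or.inr (hδ₂ z (lt_of_lt_of_le hz (min_le_right _ _)) ?_)
    nlinarith [sq_nonneg (cross u (pA - y)), mul_self_nonneg (cross u (z-y))]

lemma combo_eq (p q r : ℝ × ℝ) (B C : ℝ) :
    p + B • (q - p) + C • (r - p) = (1 - B - C) • p + B • q + C • r := by
  ext <;> simp [Prod.smul_def, smul_eq_mul] <;> ring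

/-- The frontier of a nondegenerate triangle is contained in its three edges. -/
lemma tri_frontier (p q r : ℝ × ℝ) (hnd : cross (q - p) (r - p) ≠ 0) :
    frontier (convexHull ℝ ({p, q, r} : Set (ℝ × ℝ))) ⊆
      segment ℝ p q ∪ segment ℝ q r ∪ segment ℝ p r := by
  intro y hy
  have hclosed : IsClosed (convexHull ℝ ({p, q, r} : Set (ℝ × ℝ))) :=
    ((Set.finite_singleton r).insert q |>.insert p).isClosed_convexHull ℝ
  have hyhull : y ∈ convexHull ℝ ({p, q, r} : Set (ℝ × ℝ)) := by
    have := frontier_subset_closure hy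
    rwa [hclosed.closure_eq] at this
  obtain ⟨α, β, γ, hα, hβ, hγ, hsum, hrep⟩ := tri_coords p q r y hyhull
  rcases eq_or_lt_of_le hα with hα0 | hαpos
  · left; right
    exact ⟨β, γ, hβ, hγ, by linarith, by rw [hrep, ← hα0]; simp⟩
  rcases eq_or_lt_of_le hβ with hβ0 | hβpos
  · right
    exact ⟨α, γ, hα, hγ, by linarith, by rw [hrep, ← hβ0]; simp⟩
  rcases eq_or_lt_of_le hγ with hγ0 | hγpos
  · left; left
    exact ⟨α, β, hα, hβ, by linarith, by rw [hrep, ← hγ0]; simp⟩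
  -- all coefficients positive: y is interior, contradiction
  exfalso
  have hyrep : y = p + β • (q - p) + γ • (r - p) := by
    rw [combo_eq, hrep]; congr 1; · congr 1; congr 1; linarith
  set ε : ℝ := min (min β γ) (α / 2) with hε
  have hεpos : 0 < ε := lt_min (lt_min hβpos hγpos) (by linarith)
  obtain ⟨δ, hδpos, hδ⟩ := ballcoord y (q - p) (r - p) hnd ε hεpos
  have hint : y ∈ interior (convexHull ℝ ({p, q, r} : Set (ℝ × ℝ))) := by
    rw [mem_interior]
    refine ⟨Metric.ball y δ, fun z hz => ?_, Metric.isOpen_ball, Metric.mem_ball_self hδpos⟩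
    rw [Metric.mem_ball] at hz
    obtain ⟨hrep', hσ, hτ⟩ := hδ z hz
    set σ := cross (z - y) (r - p) / cross (q - p) (r - p)
    set τ := cross (q - p) (z - y) / cross (q - p) (r - p)
    have hεβ : ε ≤ β := le_trans (min_le_left _ _) (min_le_left _ _)
    have hεγ : ε ≤ γ := le_trans (min_le_left _ _) (min_le_right _ _)
    have hεα : ε ≤ α / 2 := min_le_right _ _
    have hσ' := abs_lt.mp hσ
    have hτ' := abs_lt.mp hτ
    apply mem_tri p q r z (1 - (β + σ) - (γ + τ)) (β + σ) (γ + τ)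
    · linarith
    · linarith
    · linarith
    · ring
    · rw [← combo_eq, hrep', hyrep, add_smul, add_smul]
      abel
  have h2 : y ∉ interior (convexHull ℝ ({p, q, r} : Set (ℝ × ℝ))) := by
    rw [← closure_diff_interior] at hy
    exact hy.2
  exact h2 hint


open Bornology in
/-- Fill lemma: a bounded set whose frontier lies in the polygon's carrier is contained
in the carrier. -/
lemma fill (P : SimplePolygon) (t : Set (ℝ × ℝ)) (hb : IsBounded t)
    (hf : frontier t ⊆ P.carrier) : t ⊆ P.carrier := by
  intro x hx
  by_contra hxc
  set Γ := (⋃ i : Fin P.n, segment ℝ (P.vtx i) (P.vtx (finRotate P.n i))) with hΓ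
  have hxΓ : x ∈ Γᶜ := by
    intro hmem
    apply hxc
    rw [P.carrier_def]
    simp only [Set.mem_setOf_eq]
    rw [connectedComponentIn_eq_empty (by simp only [Set.mem_compl_iff, not_not]; exact hmem)]
    exact Bornology.isBounded_empty
  set S := connectedComponentIn Γᶜ x with hS
  have hSunb : ¬ IsBounded S := by
    intro hbS
    apply hxc
    rw [P.carrier_def]
    exact hbS
  have hScarrier : ∀ y ∈ S, y ∉ P.carrier := by
    intro y hy hyc
    rw [P.carrier_def] at hyc
    simp only [Set.mem_setOf_eq] at hyc
    rw [← connectedComponentIn_eq hy] at hyc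
    exact hSunb hyc
  have hxS : x ∈ S := mem_connectedComponentIn hxΓ
  -- S is preconnected, meets interior t and the complement of closure t,
  -- misses frontier t; contradiction.
  have hxint : x ∈ interior t := by
    have hxfront : x ∉ frontier t := fun h => hxc (hf h)
    rcases self_diff_frontier t ▸ (Set.mem_diff x).mpr ⟨hx, hxfront⟩ with h
    exact h
  obtain ⟨z, hzS, hzt⟩ : ∃ z ∈ S, z ∉ closure t := by
    by_contra hcon
    push_neg at hcon
    exact hSunb (hb.closure.subset hcon)
  have hpre : IsPreconnected S := isPreconnected_connectedComponentIn
  have := hpre (interior t) ((closure t)ᶜ) isOpen_interior (isClosed_closure.isOpen_compl)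
    (fun y hy => by
      by_cases hyt : y ∈ closure t
      · left
        have : y ∉ frontier t := fun h => hScarrier y hy (hf h)
        rw [← closure_diff_interior] at this
        simp only [Set.mem_diff, not_and, not_not] at this
        exact this hyt
      · right; exact hyt)
    ⟨x, hxS, hxint⟩ ⟨z, hzS, hzt⟩
  obtain ⟨w, hwS, hwint, hwcl⟩ := this
  exact hwcl (subset_closure (interior_subset hwint))

lemma cross_shift (u w : ℝ × ℝ) (θ : ℝ) : cross u (w - θ • u) = cross u w := by
  simp only [cross, Prod.smul_def, smul_eq_mul, Prod.fst_sub, Prod.snd_sub]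
  ring

open Bornology in
/-- Final assembly: two side-covers whose apexes lie strictly on opposite sides of the
segment `[P₁,P₂]` fill a neighborhood region of the segment, which is then in the carrier. -/
lemma final_assembly (P : SimplePolygon) (P₁ P₂ pA pB : ℝ × ℝ) (TA TB : Set (ℝ × ℝ))
    (hbA : IsBounded TA) (hbB : IsBounded TB)
    (hfA : frontier TA ⊆ P.carrier ∪ segment ℝ P₁ P₂)
    (hfB : frontier TB ⊆ P.carrier ∪ segment ℝ P₁ P₂)
    (hHA : convexHull ℝ ({P₁, P₂, pA} : Set (ℝ × ℝ)) ⊆ TA)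
    (hHB : convexHull ℝ ({P₁, P₂, pB} : Set (ℝ × ℝ)) ⊆ TB)
    (hsides : cross (P₂ - P₁) (pA - P₁) * cross (P₂ - P₁) (pB - P₁) < 0)
    (h1 : P₁ ∈ P.carrier) (h2 : P₂ ∈ P.carrier) :
    segment ℝ P₁ P₂ ⊆ P.carrier := by
  set t := TA ∪ TB with ht
  have hfront : frontier t ⊆ P.carrier := by
    intro y hy
    have hy' := (frontier_union_subset TA TB) hy
    have hyseg : y ∈ P.carrier ∨ y ∈ segment ℝ P₁ P₂ := by
      rcases hy' with h | h
      · rcases hfA h.1 with h' | h'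
        · exact Or.inl h'
        · exact Or.inr h'
      · rcases hfB h.2 with h' | h'
        · exact Or.inl h'
        · exact Or.inr h'
    rcases hyseg with h | h
    · exact h
    · rw [segment_eq_image'] at h
      obtain ⟨θ, ⟨hθ0, hθ1⟩, hyeq⟩ := h
      dsimp only at hyeq
      rcases eq_or_lt_of_le hθ0 with h0 | h0
      · simp only [← h0, zero_smul, add_zero] at hyeq; rw [← hyeq]; exact h1
      rcases eq_or_lt_of_le hθ1 with h1' | h1'
      · rw [h1'] at hyeq
        simp only [one_smul] at hyeq
        have : y = P₂ := by rw [← hyeq]; abel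
        rw [this]; exact h2
      -- 0 < θ < 1 : interior point, contradiction
      exfalso
      set u := P₂ - P₁ with hu
      have he₁ : P₁ = y + (-θ) • u := by rw [← hyeq, hu]; module
      have he₂ : P₂ = y + (1 - θ) • u := by rw [← hyeq, hu]; module
      have hAB : cross u (pA - y) * cross u (pB - y) < 0 := by
        have hA : pA - y = (pA - P₁) - θ • u := by rw [← hyeq, hu]; module
        have hB : pB - y = (pB - P₁) - θ • u := by rw [← hyeq, hu]; module
        rw [hA, hB, cross_shift, cross_shift]
        exact hsides
      have hint := int_cover y u pA pB P₁ P₂ P₁ P₂ (-θ) (1 - θ) (-θ) (1 - θ)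
        he₁ he₂ (by linarith) (by linarith) he₁ he₂ (by linarith) (by linarith) hAB
      have hsub : (convexHull ℝ ({P₁, P₂, pA} : Set (ℝ × ℝ)) ∪
          convexHull ℝ ({P₁, P₂, pB} : Set (ℝ × ℝ))) ⊆ t :=
        Set.union_subset (hHA.trans Set.subset_union_left) (hHB.trans Set.subset_union_right)
      have : y ∈ interior t := interior_mono hsub hint
      rw [← closure_diff_interior] at hy
      exact hy.2 this
  have := fill P t (hbA.union hbB) hfront
  intro z hz
  apply this
  apply Set.subset_union_left
  apply hHA
  exact (convex_convexHull ℝ _).segment_subset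
    (subset_convexHull ℝ _ (by simp)) (subset_convexHull ℝ _ (by simp)) hz

lemma cross_basis (B₁ B₂ : ℝ × ℝ) (p₁ p₂ q₁ q₂ : ℝ) :
    cross (p₁ • B₁ + p₂ • B₂) (q₁ • B₁ + q₂ • B₂) = (p₁ * q₂ - p₂ * q₁) * cross B₁ B₂ := by
  simp only [cross, Prod.smul_def, smul_eq_mul, Prod.fst_add, Prod.snd_add]
  ring

lemma seg_sub_seg (p q c d : ℝ × ℝ) (hc : c ∈ segment ℝ p q) (hd : d ∈ segment ℝ p q) :
    segment ℝ c d ⊆ segment ℝ p q :=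
  (convex_segment p q).segment_subset hc hd

lemma tri_bounded (p q r : ℝ × ℝ) :
    Bornology.IsBounded (convexHull ℝ ({p, q, r} : Set (ℝ × ℝ))) :=
  (((Set.finite_singleton r).insert q |>.insert p).isCompact_convexHull ℝ).isBounded

lemma tri_perm (p q r : ℝ × ℝ) :
    convexHull ℝ ({p, q, r} : Set (ℝ × ℝ)) = convexHull ℝ ({r, p, q} : Set (ℝ × ℝ)) := by
  congr 1
  ext z
  simp only [Set.mem_insert_iff, Set.mem_singleton_iff]
  tauto

open Bornology in
set_option maxHeartbeats 1000000 in
/-- Side cover: produces a one-side assembly for the segment `[a,v']`. -/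
lemma side_cover (P : SimplePolygon) (a B₁ B₂ v' w b : ℝ × ℝ) (x₁ x₂ a₁ a₂ : ℝ)
    (hv' : v' - a = x₁ • B₁ + x₂ • B₂)
    (hw : w - a = a₁ • B₁ + a₂ • B₂)
    (hb : b - a = B₁)
    (hx₂ : x₂ < 0) (ha₂ : a₂ ≤ 0)
    (hS : 0 < x₁ * a₂ - x₂ * a₁)
    (hF : cross B₁ B₂ ≠ 0)
    (haw : segment ℝ a w ⊆ P.carrier)
    (hwb : segment ℝ w b ⊆ P.carrier)
    (hv'b : segment ℝ v' b ⊆ P.carrier)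
    (haC : a ∈ P.carrier) (hv'C : v' ∈ P.carrier) :
    ∃ (TA : Set (ℝ × ℝ)) (p : ℝ × ℝ) (Sp : ℝ),
      IsBounded TA ∧ (frontier TA ⊆ P.carrier ∪ segment ℝ a v') ∧
      convexHull ℝ ({a, v', p} : Set (ℝ × ℝ)) ⊆ TA ∧ 0 < Sp ∧
      cross (v' - a) (p - a) = Sp * cross B₁ B₂ := by
  set F := cross B₁ B₂ with hFdef
  have hF2 : 0 < F ^ 2 := by positivity
  set S : ℝ := x₁ * a₂ - x₂ * a₁ with hSdef
  set ℓb : ℝ := (a₁ - x₁) * (-x₂) - (a₂ - x₂) * (1 - x₁) with hℓdef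
  -- basic cross computations
  have hwv' : w - v' = (a₁ - x₁) • B₁ + (a₂ - x₂) • B₂ := by
    have : w - v' = (w - a) - (v' - a) := by abel
    rw [this, hv', hw]; module
  have hav' : a - v' = (-x₁) • B₁ + (-x₂) • B₂ := by
    have : a - v' = -(v' - a) := by abel
    rw [this, hv']; module
  have hbv' : b - v' = (1 - x₁) • B₁ + (-x₂) • B₂ := by
    have : b - v' = (b - a) - (v' - a) := by abel
    rw [this, hv', hb]; module
  have hcross_wv'_av' : cross (w - v') (a - v') = S * F := by
    rw [hwv', hav', cross_basis, hSdef, hFdef]; ring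
  have hcross_wv'_bv' : cross (w - v') (b - v') = ℓb * F := by
    rw [hwv', hbv', cross_basis, hℓdef, hFdef]
  have hcross_v'a_wa : cross (v' - a) (w - a) = S * F := by
    rw [hv', hw, cross_basis, hSdef, hFdef]
  rcases lt_or_ge ℓb 0 with hfan | hkite
  · -- fan case
    refine ⟨convexHull ℝ ({a, v', w} : Set (ℝ × ℝ)) ∪ convexHull ℝ ({v', w, b} : Set (ℝ × ℝ)),
      w, S, (tri_bounded _ _ _).union (tri_bounded _ _ _), ?_, Set.subset_union_left, hS,
      hcross_v'a_wa⟩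
    intro y hy
    have hynd₁ : cross (v' - a) (w - a) ≠ 0 := by
      rw [hcross_v'a_wa]; intro h
      rcases mul_eq_zero.mp h with h | h
      · linarith
      · exact hF h
    have hynd₂ : cross (w - v') (b - v') ≠ 0 := by
      rw [hcross_wv'_bv']; intro h
      rcases mul_eq_zero.mp h with h | h
      · linarith
      · exact hF h
    have hy' := frontier_union_subset _ _ hy
    -- helper: y in open segment v' w is interior
    have hopen : ∀ θ : ℝ, 0 < θ → θ < 1 → y = v' + θ • (w - v') → False := by
      intro θ hθ0 hθ1 hyeq
      set u := w - v' with hu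
      have he₁ : v' = y + (-θ) • u := by rw [hyeq, hu]; module
      have he₂ : w = y + (1 - θ) • u := by rw [hyeq, hu]; module
      have hAB : cross u (a - y) * cross u (b - y) < 0 := by
        have hA : a - y = (a - v') - θ • u := by rw [hyeq]; abel
        have hB : b - y = (b - v') - θ • u := by rw [hyeq]; abel
        rw [hA, hB, cross_shift, cross_shift, hcross_wv'_av', hcross_wv'_bv']
        have hprod : S * F * (ℓb * F) = S * ℓb * F ^ 2 := by ring
        rw [hprod]
        have := mul_pos (mul_pos hS hF2) (neg_pos.mpr hfan)
        nlinarith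
      have hint := int_cover y u a b v' w v' w (-θ) (1 - θ) (-θ) (1 - θ)
        he₁ he₂ (by linarith) (by linarith) he₁ he₂ (by linarith) (by linarith) hAB
      have hsub : (convexHull ℝ ({v', w, a} : Set (ℝ × ℝ)) ∪
          convexHull ℝ ({v', w, b} : Set (ℝ × ℝ))) ⊆
          (convexHull ℝ ({a, v', w} : Set (ℝ × ℝ)) ∪ convexHull ℝ ({v', w, b} : Set (ℝ × ℝ))) := by
        rw [tri_perm v' w a]
      have hyint := interior_mono hsub hint
      rw [← closure_diff_interior] at hy
      exact hy.2 hyint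
    rcases hy' with h | h
    · have := tri_frontier a v' w hynd₁ h.1
      rcases this with (h' | h') | h'
      · right; exact h'
      · -- segment v' w
        rw [segment_eq_image'] at h'
        obtain ⟨θ, ⟨hθ0, hθ1⟩, hyeq⟩ := h'
        dsimp only at hyeq
        rcases eq_or_lt_of_le hθ0 with h0 | h0
        · left; rw [← hyeq, ← h0]; simpa using hv'C
        rcases eq_or_lt_of_le hθ1 with h1 | h1
        · left; rw [← hyeq, h1]
          have : v' + (1:ℝ) • (w - v') = w := by module
          rw [this]
          exact haw (right_mem_segment ℝ a w)
        · exact (hopen θ h0 h1 hyeq.symm).elim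
      · left; exact haw h'
    · have := tri_frontier v' w b hynd₂ h.2
      rcases this with (h' | h') | h'
      · -- segment v' w
        rw [segment_eq_image'] at h'
        obtain ⟨θ, ⟨hθ0, hθ1⟩, hyeq⟩ := h'
        dsimp only at hyeq
        rcases eq_or_lt_of_le hθ0 with h0 | h0
        · left; rw [← hyeq, ← h0]; simpa using hv'C
        rcases eq_or_lt_of_le hθ1 with h1 | h1
        · left; rw [← hyeq, h1]
          have : v' + (1:ℝ) • (w - v') = w := by module
          rw [this]
          exact haw (right_mem_segment ℝ a w)
        · exact (hopen θ h0 h1 hyeq.symm).elim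
      · left; exact hwb h'
      · left; exact hv'b h'
  · -- kite case
    set Dn : ℝ := ℓb - x₂ with hDn
    have hDnpos : 0 < Dn := by rw [hDn]; linarith
    have hx₂ne : x₂ ≠ 0 := ne_of_lt hx₂
    have hDnne : Dn ≠ 0 := ne_of_gt hDnpos
    set ρ : ℝ := -x₂ / Dn with hρ
    have hρDn : ρ * Dn = -x₂ := by rw [hρ]; field_simp
    have hρpos : 0 < ρ := div_pos (by linarith) hDnpos
    have hρle : ρ ≤ 1 := by
      rw [hρ, div_le_one hDnpos]; linarith
    set c : ℝ × ℝ := a + ρ • (w - a) with hc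
    set u' : ℝ := 1 - ρ * a₂ / x₂ with hu'
    have hDnalt : Dn = -x₂ * a₁ - a₂ + a₂ * x₁ := by rw [hDn, hℓdef]; ring
    have hρa₂ : 0 < ρ * a₂ - x₂ := by
      have key : (ρ * a₂ - x₂) * Dn = (-x₂) * S := by
        have h1 : a₂ + Dn - S = 0 := by rw [hDnalt, hSdef]; ring
        nlinarith [hρDn, h1]
      nlinarith [mul_pos (neg_pos.mpr hx₂) hS, hDnpos, key]
    have hu'x₂ : u' * x₂ = x₂ - ρ * a₂ := by
      rw [hu']; field_simp
    have hρa₂' : ρ * a₂ ≤ 0 := by nlinarith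
    have hu'0 : 0 < u' := by
      by_contra hcon
      push_neg at hcon
      have h2 : 0 ≤ u' * x₂ := by nlinarith [mul_nonneg (neg_nonneg.mpr hcon) (neg_nonneg.mpr (le_of_lt hx₂))]
      nlinarith
    have hu'1 : u' ≤ 1 := by
      by_contra hcon
      push_neg at hcon
      have h2 : u' * x₂ < 1 * x₂ := mul_lt_mul_of_neg_right hcon hx₂
      nlinarith
    have hcv'b : c = v' + u' • (b - v') := by
      have hca : c - a = ρ • (w - a) := by rw [hc]; abel
      have key : c - v' = u' • (b - v') := by
        have h1 : c - v' = (c - a) - (v' - a) := by abel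
        rw [h1, hca, hw, hv', hbv']
        have e1 : ρ * a₁ - x₁ = u' * (1 - x₁) := by
          apply mul_left_cancel₀ hx₂ne
          have hrw : x₂ * (u' * (1 - x₁)) = (u' * x₂) * (1 - x₁) := by ring
          rw [hrw, hu'x₂]
          linear_combination ρ * hDnalt - hρDn
        have e2 : ρ * a₂ - x₂ = u' * (-x₂) := by
          linear_combination hu'x₂
        calc ρ • (a₁ • B₁ + a₂ • B₂) - (x₁ • B₁ + x₂ • B₂)
            = (ρ * a₁ - x₁) • B₁ + (ρ * a₂ - x₂) • B₂ := by module
          _ = (u' * (1 - x₁)) • B₁ + (u' * (-x₂)) • B₂ := by rw [e1, e2]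
          _ = u' • ((1 - x₁) • B₁ + (-x₂) • B₂) := by module
      have := key
      rw [sub_eq_iff_eq_add] at this
      rw [this]; abel
    have hcseg_aw : c ∈ segment ℝ a w := by
      rw [segment_eq_image']
      refine ⟨ρ, ⟨le_of_lt hρpos, hρle⟩, ?_⟩
      first
      | rfl
      | (dsimp only; exact hc.symm)
    have hcseg_v'b : c ∈ segment ℝ v' b := by
      rw [segment_eq_image']
      refine ⟨u', ⟨le_of_lt hu'0, hu'1⟩, ?_⟩
      first
      | rfl
      | (dsimp only; exact hcv'b.symm)
    have hcC : c ∈ P.carrier := haw hcseg_aw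
    have hca : c - a = ρ • (w - a) := by rw [hc]; abel
    have hcrossc : cross (v' - a) (c - a) = (ρ * S) * F := by
      rw [hca]
      have : cross (v' - a) (ρ • (w - a)) = ρ * cross (v' - a) (w - a) := by
        simp only [cross, Prod.smul_def, smul_eq_mul, Prod.fst_sub, Prod.snd_sub]
        ring
      rw [this, hcross_v'a_wa]; ring
    refine ⟨convexHull ℝ ({a, v', c} : Set (ℝ × ℝ)), c, ρ * S,
      tri_bounded _ _ _, ?_, le_refl _, by positivity, hcrossc⟩
    intro y hy
    have hynd : cross (v' - a) (c - a) ≠ 0 := by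
      rw [hcrossc]; intro h
      rcases mul_eq_zero.mp h with h | h
      · nlinarith
      · exact hF h
    have := tri_frontier a v' c hynd hy
    rcases this with (h' | h') | h'
    · right; exact h'
    · -- segment v' c ⊆ segment v' b
      left
      apply hv'b
      exact seg_sub_seg v' b v' c (left_mem_segment ℝ v' b) hcseg_v'b h'
    · -- segment a c ⊆ segment a w
      left
      apply haw
      exact seg_sub_seg a w a c (left_mem_segment ℝ a w) hcseg_aw h'

lemma cross_antisymm (p q : ℝ × ℝ) : cross p q = -cross q p := by
  simp only [cross]; ring

lemma cross_add_right (p q r : ℝ × ℝ) : cross p (q + r) = cross p q + cross p r := by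
  simp only [cross, Prod.fst_add, Prod.snd_add]; ring

lemma cross_smul_right' (r : ℝ) (p q : ℝ × ℝ) : cross p (r • q) = r * cross p q := by
  simp only [cross, Prod.smul_def, smul_eq_mul]; ring

lemma cross_add_left (p q r : ℝ × ℝ) : cross (p + q) r = cross p r + cross q r := by
  simp only [cross, Prod.fst_add, Prod.snd_add]; ring

lemma cross_smul_left (r : ℝ) (p q : ℝ × ℝ) : cross (r • p) q = r * cross p q := by
  simp only [cross, Prod.smul_def, smul_eq_mul]; ring

lemma cross_self'' (p : ℝ × ℝ) : cross p p = 0 := by simp [cross]; ring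

/-- Splitting a segment at an interior point. -/
lemma seg_split (p q m : ℝ × ℝ) (hm : m ∈ segment ℝ p q) :
    segment ℝ p q ⊆ segment ℝ p m ∪ segment ℝ m q := by
  rw [segment_eq_image'] at hm
  obtain ⟨ζ, ⟨hζ0, hζ1⟩, hmeq⟩ := hm
  dsimp only at hmeq
  intro z hz
  rw [segment_eq_image'] at hz
  obtain ⟨u, ⟨hu0, hu1⟩, hzeq⟩ := hz
  dsimp only at hzeq
  rcases le_or_gt u ζ with hle | hlt
  · left
    rcases eq_or_lt_of_le hζ0 with h0 | h0
    · have hu : u = 0 := le_antisymm (by linarith) hu0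
      rw [← hzeq, hu]
      simp only [zero_smul, add_zero]
      exact left_mem_segment ℝ p m
    · rw [segment_eq_image']
      refine ⟨u / ζ, ⟨div_nonneg hu0 (le_of_lt h0), by rw [div_le_one h0]; linarith⟩, ?_⟩
      dsimp only
      rw [← hzeq, ← hmeq]
      have : p + ζ • (q - p) - p = ζ • (q - p) := by abel
      rw [this, smul_smul, div_mul_cancel₀ _ (ne_of_gt h0)]
  · right
    have hζ1' : ζ < 1 := lt_of_lt_of_le hlt hu1
    rw [segment_eq_image']
    refine ⟨(u - ζ) / (1 - ζ), ⟨div_nonneg (by linarith) (by linarith), ?_⟩, ?_⟩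
    · rw [div_le_one (by linarith)]; linarith
    · dsimp only
      rw [← hzeq, ← hmeq]
      have h2 : q - (p + ζ • (q - p)) = (1 - ζ) • (q - p) := by
        rw [sub_smul, one_smul]; abel
      rw [h2, smul_smul, div_mul_cancel₀ _ (by intro h; rw [sub_eq_zero] at h; linarith : (1:ℝ) - ζ ≠ 0)]
      rw [add_assoc, ← add_smul]
      congr 2
      ring

/-- The collinear case: `w` lies on the ray from `a` through `v'`. -/
lemma online_case (P : SimplePolygon) (a v' w b₁ b₂ B₁ B₂ : ℝ × ℝ) (x₁ x₂ a₁ a₂ : ℝ)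
    (hv' : v' - a = x₁ • B₁ + x₂ • B₂)
    (hw : w - a = a₁ • B₁ + a₂ • B₂)
    (hb1 : b₁ - a = B₁) (hb2 : b₂ - a = B₂)
    (hx₁ : x₁ < 0) (hx₂ : x₂ < 0) (ha₁ : a₁ ≤ 0)
    (hS : x₁ * a₂ - x₂ * a₁ = 0)
    (hF : cross B₁ B₂ ≠ 0)
    (hwa : segment ℝ w a ⊆ P.carrier)
    (hwb₁ : segment ℝ w b₁ ⊆ P.carrier)
    (hwb₂ : segment ℝ w b₂ ⊆ P.carrier)
    (hv'b₁ : segment ℝ v' b₁ ⊆ P.carrier)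
    (hv'b₂ : segment ℝ v' b₂ ⊆ P.carrier)
    (haC : a ∈ P.carrier) (hv'C : v' ∈ P.carrier) (hwC : w ∈ P.carrier) :
    segment ℝ a v' ⊆ P.carrier := by
  have hF2 : 0 < cross B₁ B₂ ^ 2 := by positivity
  have hx₁ne : x₁ ≠ 0 := ne_of_lt hx₁
  set ζ : ℝ := a₁ / x₁ with hζ
  have hζ0 : 0 ≤ ζ := by
    rw [hζ, div_nonneg_iff]; right; exact ⟨ha₁, le_of_lt hx₁⟩
  have ha₁' : a₁ = ζ * x₁ := by rw [hζ]; field_simp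
  have ha₂' : a₂ = ζ * x₂ := by
    rw [hζ]
    rw [div_mul_eq_mul_div, eq_div_iff hx₁ne]
    nlinarith [hS]
  have hwζ : w - a = ζ • (v' - a) := by
    rw [hw, hv', ha₁', ha₂']; module
  rcases le_or_gt 1 ζ with hζ1 | hζ1
  · -- v' between a and w
    have hζpos : 0 < ζ := by linarith
    have hv'mem : v' ∈ segment ℝ a w := by
      rw [segment_eq_image']
      refine ⟨1 / ζ, ⟨by positivity, by rw [div_le_one hζpos]; linarith⟩, ?_⟩
      dsimp only
      have : w - a = ζ • (v' - a) := hwζ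
      rw [this, smul_smul, one_div, inv_mul_cancel₀ (ne_of_gt hζpos), one_smul]
      abel
    intro z hz
    apply hwa
    rw [segment_symm]
    exact seg_sub_seg a w a v' (left_mem_segment ℝ a w) hv'mem hz
  · -- w between a and v' : split
    have hwmem : w ∈ segment ℝ a v' := by
      rw [segment_eq_image']
      exact ⟨ζ, ⟨hζ0, le_of_lt hζ1⟩, by dsimp only; rw [← hwζ]; abel⟩
    have hv'w : v' - w = (1 - ζ) • (v' - a) := by
      have : v' - w = (v' - a) - (w - a) := by abel
      rw [this, hwζ]; module
    have hb₁w : b₁ - w = (1 - ζ * x₁) • B₁ + (-ζ * x₂) • B₂ := by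
      have : b₁ - w = (b₁ - a) - (w - a) := by abel
      rw [this, hb1, hw, ha₁', ha₂']; module
    have hb₂w : b₂ - w = (-ζ * x₁) • B₁ + (1 - ζ * x₂) • B₂ := by
      have : b₂ - w = (b₂ - a) - (w - a) := by abel
      rw [this, hb2, hw, ha₁', ha₂']; module
    have hv'wb : v' - w = ((1 - ζ) * x₁) • B₁ + ((1 - ζ) * x₂) • B₂ := by
      rw [hv'w, hv']; module
    have hc1 : cross (v' - w) (b₁ - w) = ((1 - ζ) * (-x₂)) * cross B₁ B₂ := by
      rw [hv'wb, hb₁w, cross_basis]; ring_nf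
    have hc2 : cross (v' - w) (b₂ - w) = ((1 - ζ) * x₁) * cross B₁ B₂ := by
      rw [hv'wb, hb₂w, cross_basis]; ring_nf
    have hseg2 : segment ℝ w v' ⊆ P.carrier := by
      apply final_assembly P w v' b₁ b₂
        (convexHull ℝ ({w, v', b₁} : Set (ℝ × ℝ))) (convexHull ℝ ({w, v', b₂} : Set (ℝ × ℝ)))
        (tri_bounded _ _ _) (tri_bounded _ _ _)
      · -- frontier TA
        intro y hy
        have hnd : cross (v' - w) (b₁ - w) ≠ 0 := by
          rw [hc1]; intro h
          rcases mul_eq_zero.mp h with h | h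
          · nlinarith
          · exact hF h
        rcases tri_frontier w v' b₁ hnd hy with (h' | h') | h'
        · right; exact h'
        · left; exact hv'b₁ h'
        · left; exact hwb₁ h'
      · intro y hy
        have hnd : cross (v' - w) (b₂ - w) ≠ 0 := by
          rw [hc2]; intro h
          rcases mul_eq_zero.mp h with h | h
          · nlinarith
          · exact hF h
        rcases tri_frontier w v' b₂ hnd hy with (h' | h') | h'
        · right; exact h'
        · left; exact hv'b₂ h'
        · left; exact hwb₂ h'
      · exact le_refl _
      · exact le_refl _
      · rw [hc1, hc2]
        have : (1 - ζ) * -x₂ * cross B₁ B₂ * ((1 - ζ) * x₁ * cross B₁ B₂)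
            = ((1 - ζ) * (1 - ζ)) * (-x₂ * x₁) * cross B₁ B₂ ^ 2 := by ring
        rw [this]
        have h1 : 0 < (1 - ζ) * (1 - ζ) := by nlinarith
        have h2 : -x₂ * x₁ < 0 := by nlinarith
        nlinarith [mul_pos h1 hF2]
      · exact hwC
      · exact hv'C
    have hseg1 : segment ℝ a w ⊆ P.carrier := by rw [segment_symm]; exact hwa
    intro z hz
    rcases seg_split a v' w hwmem hz with h | h
    · exact hseg1 h
    · exact hseg2 h

/-- Strictly positive barycentric coordinates from interior membership. -/
lemma interior_tri_pos (v b₁ b₂ a : ℝ × ℝ)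
    (h : a ∈ interior (convexHull ℝ ({v, b₁, b₂} : Set (ℝ × ℝ))))
    (hv : v ≠ a) (h1 : b₁ ≠ a) (h2 : b₂ ≠ a) :
    ∃ α β γ : ℝ, 0 < α ∧ 0 < β ∧ 0 < γ ∧ α + β + γ = 1 ∧ a = α • v + β • b₁ + γ • b₂ := by
  rw [mem_interior_iff_mem_nhds, Metric.mem_nhds_iff] at h
  obtain ⟨ε, hε, hball⟩ := h
  have perturb : ∀ g : ℝ × ℝ, g ≠ a →
      ∃ η : ℝ, 0 < η ∧ ∃ α β γ : ℝ, 0 ≤ α ∧ 0 ≤ β ∧ 0 ≤ γ ∧ α + β + γ = 1 ∧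
        a + η • (a - g) = α • v + β • b₁ + γ • b₂ := by
    intro g hg
    have hag : a - g ≠ 0 := fun hc => hg (by rw [sub_eq_zero] at hc; exact hc.symm)
    have hnorm : 0 < ‖a - g‖ := norm_pos_iff.mpr hag
    set η : ℝ := ε / (2 * ‖a - g‖) with hη
    have hηpos : 0 < η := by positivity
    refine ⟨η, hηpos, ?_⟩
    have hmem : a + η • (a - g) ∈ convexHull ℝ ({v, b₁, b₂} : Set (ℝ × ℝ)) := by
      apply hball
      rw [Metric.mem_ball, dist_eq_norm]
      have : a + η • (a - g) - a = η • (a - g) := by abel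
      rw [this, norm_smul, Real.norm_eq_abs, abs_of_pos hηpos, hη]
      rw [div_mul_eq_mul_div, mul_comm]
      rw [div_lt_iff₀ (by positivity)]
      nlinarith
    exact tri_coords v b₁ b₂ _ hmem
  -- apply with g = v, b₁, b₂ and normalize
  have combo : ∀ g : ℝ × ℝ, ∀ η α β γ : ℝ, 0 < η →
      a + η • (a - g) = α • v + β • b₁ + γ • b₂ → α + β + γ = 1 →
      a = (1 / (1 + η)) • (α • v + β • b₁ + γ • b₂ + η • g) := by
    intro g η α β γ hη heq hsum
    have h1η : (1 : ℝ) + η ≠ 0 := by positivity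
    have : (1 + η) • a = α • v + β • b₁ + γ • b₂ + η • g := by
      rw [← heq]; module
    rw [← this, smul_smul, one_div, inv_mul_cancel₀ h1η, one_smul]
  obtain ⟨η₁, hη₁, A₁, B₁', C₁, hA₁, hB₁, hC₁, hs₁, he₁⟩ := perturb v hv
  obtain ⟨η₂, hη₂, A₂, B₂', C₂, hA₂, hB₂, hC₂, hs₂, he₂⟩ := perturb b₁ h1
  obtain ⟨η₃, hη₃, A₃, B₃', C₃, hA₃, hB₃, hC₃, hs₃, he₃⟩ := perturb b₂ h2
  have q₁ := combo v η₁ A₁ B₁' C₁ hη₁ he₁ hs₁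
  have q₂ := combo b₁ η₂ A₂ B₂' C₂ hη₂ he₂ hs₂
  have q₃ := combo b₂ η₃ A₃ B₃' C₃ hη₃ he₃ hs₃
  -- rewrite each as an explicit affine combination
  have r₁ : a = ((A₁ + η₁) / (1 + η₁)) • v + (B₁' / (1 + η₁)) • b₁ + (C₁ / (1 + η₁)) • b₂ := by
    rw [q₁]; module
  have r₂ : a = (A₂ / (1 + η₂)) • v + ((B₂' + η₂) / (1 + η₂)) • b₁ + (C₂ / (1 + η₂)) • b₂ := by
    rw [q₂]; module
  have r₃ : a = (A₃ / (1 + η₃)) • v + (B₃' / (1 + η₃)) • b₁ + ((C₃ + η₃) / (1 + η₃)) • b₂ := by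
    rw [q₃]; module
  set α := (((A₁ + η₁) / (1 + η₁)) + (A₂ / (1 + η₂)) + (A₃ / (1 + η₃))) / 3 with hα
  set β := ((B₁' / (1 + η₁)) + ((B₂' + η₂) / (1 + η₂)) + (B₃' / (1 + η₃))) / 3 with hβ
  set γ := ((C₁ / (1 + η₁)) + (C₂ / (1 + η₂)) + ((C₃ + η₃) / (1 + η₃))) / 3 with hγ
  refine ⟨α, β, γ, ?_, ?_, ?_, ?_, ?_⟩
  · rw [hα]
    have h1 : 0 < (A₁ + η₁) / (1 + η₁) := by positivity
    have h2 : 0 ≤ A₂ / (1 + η₂) := by positivity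
    have h3 : 0 ≤ A₃ / (1 + η₃) := by positivity
    linarith
  · rw [hβ]
    have h1 : 0 ≤ B₁' / (1 + η₁) := by positivity
    have h2 : 0 < (B₂' + η₂) / (1 + η₂) := by positivity
    have h3 : 0 ≤ B₃' / (1 + η₃) := by positivity
    linarith
  · rw [hγ]
    have h1 : 0 ≤ C₁ / (1 + η₁) := by positivity
    have h2 : 0 ≤ C₂ / (1 + η₂) := by positivity
    have h3 : 0 < (C₃ + η₃) / (1 + η₃) := by positivity
    linarith
  · rw [hα, hβ, hγ]
    have e1 : (A₁ + η₁) / (1 + η₁) + B₁' / (1 + η₁) + C₁ / (1 + η₁) = 1 := by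
      rw [← add_div, ← add_div, div_eq_one_iff_eq (by positivity)]
      linarith
    have e2 : A₂ / (1 + η₂) + (B₂' + η₂) / (1 + η₂) + C₂ / (1 + η₂) = 1 := by
      rw [← add_div, ← add_div, div_eq_one_iff_eq (by positivity)]
      linarith
    have e3 : A₃ / (1 + η₃) + B₃' / (1 + η₃) + (C₃ + η₃) / (1 + η₃) = 1 := by
      rw [← add_div, ← add_div, div_eq_one_iff_eq (by positivity)]
      linarith
    linarith
  · rw [hα, hβ, hγ]
    calc a = (1/3 : ℝ) • a + (1/3 : ℝ) • a + (1/3 : ℝ) • a := by module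
      _ = _ := by
        nth_rewrite 1 [r₁]
        nth_rewrite 1 [r₂]
        nth_rewrite 1 [r₃]
        module

lemma cross_zero_right (p : ℝ × ℝ) : cross p 0 = 0 := by simp [cross]

lemma coordsign (c D F : ℝ) (h1 : 0 ≤ c * D) (h2 : D * F < 0) : c / F ≤ 0 := by
  rw [div_nonpos_iff]
  rcases lt_trichotomy F 0 with hF | hF | hF
  · left
    constructor
    · nlinarith
    · linarith
  · exfalso; rw [hF] at h2; simp at h2
  · right
    constructor
    · nlinarith
    · linarith

lemma coordsign' (c E F : ℝ) (h1 : 0 ≤ c * E) (h2 : 0 < E * F) : 0 ≤ c / F := by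
  rw [div_nonneg_iff]
  rcases lt_trichotomy F 0 with hF | hF | hF
  · right
    constructor
    · nlinarith
    · linarith
  · exfalso; rw [hF] at h2; simp at h2
  · left
    constructor
    · nlinarith
    · linarith

lemma hull_F_ne (v b₁ b₂ a : ℝ × ℝ) (α β γ : ℝ) (hα : 0 < α)
    (hat : a ∈ interior (convexHull ℝ ({v, b₁, b₂} : Set (ℝ × ℝ))))
    (hb₁ : b₁ ≠ a)
    (hcombo : α • (v - a) + β • (b₁ - a) + γ • (b₂ - a) = 0) :
    cross (b₁ - a) (b₂ - a) ≠ 0 := by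
  intro hF0
  have hD : α * cross (b₁ - a) (v - a) = 0 := by
    have h := congrArg (fun z => cross (b₁ - a) z) hcombo
    simp only [cross_add_right, cross_smul_right', cross_zero_right, cross_self'', hF0,
      mul_zero, add_zero] at h
    exact h
  have hDv : cross (b₁ - a) (v - a) = 0 := by
    rcases mul_eq_zero.mp hD with h | h
    · exact absurd h (ne_of_gt hα)
    · exact h
  set K := {z : ℝ × ℝ | cross (b₁ - a) (z - a) = 0} with hK
  have hKconv : Convex ℝ K := by
    intro x hx y hy θ₁ θ₂ hθ₁ hθ₂ hθsum
    simp only [hK, Set.mem_setOf_eq] at hx hy ⊢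
    have heq : θ₁ • x + θ₂ • y - a = θ₁ • (x - a) + θ₂ • (y - a) := by
      rw [show θ₂ = 1 - θ₁ by linarith]; module
    rw [heq, cross_add_right, cross_smul_right', cross_smul_right', hx, hy]; ring
  have hsub : convexHull ℝ ({v, b₁, b₂} : Set (ℝ × ℝ)) ⊆ K := by
    apply convexHull_min _ hKconv
    intro z hz
    simp only [Set.mem_insert_iff, Set.mem_singleton_iff] at hz
    rcases hz with h | h | h <;> subst h <;> simp only [hK, Set.mem_setOf_eq]
    · exact hDv
    · exact cross_self'' _
    · exact hF0
  have hint := interior_mono hsub hat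
  rw [mem_interior_iff_mem_nhds, Metric.mem_nhds_iff] at hint
  obtain ⟨r, hr, hball⟩ := hint
  set p := b₁ - a with hp
  have hpne : p ≠ 0 := fun h => hb₁ (by rw [hp, sub_eq_zero] at h; exact h)
  set q : ℝ × ℝ := (-p.2, p.1) with hq
  have hqne : q ≠ 0 := by
    intro h
    apply hpne
    have h1 := congrArg Prod.fst h
    have h2 := congrArg Prod.snd h
    simp only [hq, Prod.fst_zero, Prod.snd_zero] at h1 h2
    have : p = (p.1, p.2) := rfl
    rw [this, h2]
    have : p.2 = 0 := by linarith [neg_eq_zero.mp h1]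
    rw [this]
    rfl
  have hnormq : 0 < ‖q‖ := norm_pos_iff.mpr hqne
  have hzball : a + (r / (2 * ‖q‖)) • q ∈ Metric.ball a r := by
    rw [Metric.mem_ball, dist_eq_norm]
    have heq : a + (r / (2 * ‖q‖)) • q - a = (r / (2 * ‖q‖)) • q := by abel
    rw [heq, norm_smul, Real.norm_eq_abs, abs_of_pos (by positivity)]
    rw [div_mul_eq_mul_div, mul_comm]
    rw [div_lt_iff₀ (by positivity)]
    nlinarith
  have hzK := hball hzball
  simp only [hK, Set.mem_setOf_eq] at hzK
  have heq : a + (r / (2 * ‖q‖)) • q - a = (r / (2 * ‖q‖)) • q := by abel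
  rw [heq, cross_smul_right'] at hzK
  have hcpq : cross p q = p.1 ^ 2 + p.2 ^ 2 := by
    simp only [cross, hq]; ring
  rw [hcpq] at hzK
  have hcoef : r / (2 * ‖q‖) ≠ 0 := by positivity
  have hsq : p.1 ^ 2 + p.2 ^ 2 = 0 := by
    rcases mul_eq_zero.mp hzK with h | h
    · exact absurd h hcoef
    · exact h
  apply hpne
  have h1 : p.1 = 0 := by nlinarith [sq_nonneg p.1, sq_nonneg p.2]
  have h2 : p.2 = 0 := by nlinarith [sq_nonneg p.1, sq_nonneg p.2]
  have : p = (p.1, p.2) := rfl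
  rw [this, h1, h2]
  rfl

set_option maxHeartbeats 2000000 in
/-- Restriction to a sub-wedge: with `a, b₁, b₂, v` as in the wedge confinement lemma,
let `w₁, w₂ ∈ P` see `a, b₁, b₂`, and let `W` be the closed wedge with apex `a` bounded
by the rays from `a` through `w₁` and `w₂`; suppose `W` lies in the wedge `U` and
contains every point of `P` that sees `a`, `b₁` and `b₂`. Then a point `v' ∈ P` that
sees `b₁` and `b₂` sees `a` if and only if `v' ∈ W`. -/
theorem stmt12 (P : SimplePolygon) (a b₁ b₂ v w₁ w₂ : ℝ × ℝ)
    (ha : a ∈ P.carrier) (hb₁ : b₁ ∈ P.carrier) (hb₂ : b₂ ∈ P.carrier) (hv : v ∈ P.carrier)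
    (hvb₁ : segment ℝ v b₁ ⊆ P.carrier) (hvb₂ : segment ℝ v b₂ ⊆ P.carrier)
    (hva : ¬ segment ℝ v a ⊆ P.carrier)
    (hat : a ∈ interior (convexHull ℝ ({v, b₁, b₂} : Set (ℝ × ℝ))))
    (hw₁P : w₁ ∈ P.carrier) (hw₂P : w₂ ∈ P.carrier)
    (hw₁ : segment ℝ w₁ a ⊆ P.carrier ∧ segment ℝ w₁ b₁ ⊆ P.carrier ∧
           segment ℝ w₁ b₂ ⊆ P.carrier)
    (hw₂ : segment ℝ w₂ a ⊆ P.carrier ∧ segment ℝ w₂ b₁ ⊆ P.carrier ∧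
           segment ℝ w₂ b₂ ⊆ P.carrier)
    (W : Set (ℝ × ℝ))
    (hW : W = {x : ℝ × ℝ | ∃ s t : ℝ, 0 ≤ s ∧ 0 ≤ t ∧ x = a + s • (w₁ - a) + t • (w₂ - a)})
    (hWU : W ⊆ {x : ℝ × ℝ | 0 ≤ cross (b₁ - a) (x - a) * cross (b₁ - a) (v - a) ∧
                            0 ≤ cross (b₂ - a) (x - a) * cross (b₂ - a) (v - a)})
    (hWall : ∀ z ∈ P.carrier, segment ℝ z a ⊆ P.carrier → segment ℝ z b₁ ⊆ P.carrier →
      segment ℝ z b₂ ⊆ P.carrier → z ∈ W) :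
    ∀ v' ∈ P.carrier, segment ℝ v' b₁ ⊆ P.carrier → segment ℝ v' b₂ ⊆ P.carrier →
      (segment ℝ v' a ⊆ P.carrier ↔ v' ∈ W) := by
  intro v' hv'C hv'b₁ hv'b₂
  constructor
  · intro hseg
    exact hWall v' hv'C hseg hv'b₁ hv'b₂
  intro hv'W
  by_cases hv'a : v' = a
  · rw [hv'a, segment_same]
    exact Set.singleton_subset_iff.mpr ha
  -- nondegeneracy
  have hvne : v ≠ a := by
    intro h
    apply hva
    rw [h, segment_same]
    exact Set.singleton_subset_iff.mpr ha
  have hb₁ne : b₁ ≠ a := fun h => hva (by rw [← h]; exact hvb₁)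
  have hb₂ne : b₂ ≠ a := fun h => hva (by rw [← h]; exact hvb₂)
  obtain ⟨α, β, γ, hα, hβ, hγ, hsum, hrep⟩ := interior_tri_pos v b₁ b₂ a hat hvne hb₁ne hb₂ne
  have hcombo : α • (v - a) + β • (b₁ - a) + γ • (b₂ - a) = 0 := by
    have h0 : α • (v - a) + β • (b₁ - a) + γ • (b₂ - a)
        = (α • v + β • b₁ + γ • b₂) - (α + β + γ) • a := by module
    rw [h0, hsum, one_smul, ← hrep, sub_self]
  have hFne : cross (b₁ - a) (b₂ - a) ≠ 0 := hull_F_ne v b₁ b₂ a α β γ hα hat hb₁ne hcombo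
  set F := cross (b₁ - a) (b₂ - a) with hFdef
  have hF2 : 0 < F ^ 2 := lt_of_le_of_ne (sq_nonneg F) (Ne.symm (pow_ne_zero 2 hFne))
  -- scalar consequences of the barycentric relation
  have hD : α * cross (b₁ - a) (v - a) + γ * F = 0 := by
    have h := congrArg (fun z => cross (b₁ - a) z) hcombo
    simp only [cross_add_right, cross_smul_right', cross_zero_right, cross_self'',
      mul_zero, add_zero] at h
    rw [← hFdef] at h
    linarith [h]
  have hE : α * cross (b₂ - a) (v - a) - β * F = 0 := by
    have h := congrArg (fun z => cross (b₂ - a) z) hcombo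
    simp only [cross_add_right, cross_smul_right', cross_zero_right, cross_self'',
      mul_zero, add_zero] at h
    rw [cross_antisymm (b₂ - a) (b₁ - a), ← hFdef] at h
    linarith [h]
  have hDF : cross (b₁ - a) (v - a) * F < 0 := by
    have h3 : α * (cross (b₁ - a) (v - a) * F) = -(γ * F ^ 2) := by linear_combination F * hD
    by_contra hcon
    push_neg at hcon
    nlinarith [mul_pos hγ hF2, mul_nonneg (le_of_lt hα) hcon]
  have hEF : 0 < cross (b₂ - a) (v - a) * F := by
    have h3 : α * (cross (b₂ - a) (v - a) * F) = β * F ^ 2 := by linear_combination F * hE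
    by_contra hcon
    push_neg at hcon
    nlinarith [mul_pos hβ hF2, mul_nonpos_of_nonneg_of_nonpos (le_of_lt hα) hcon]
  -- quadrant coordinates
  have quad : ∀ z : ℝ × ℝ, z ∈ W →
      cross (z - a) (b₂ - a) / F ≤ 0 ∧ cross (b₁ - a) (z - a) / F ≤ 0 := by
    intro z hz
    obtain ⟨hz1, hz2⟩ := hWU hz
    constructor
    · have h' := coordsign' (cross (b₂ - a) (z - a)) (cross (b₂ - a) (v - a)) F hz2 hEF
      rw [cross_antisymm (z - a) (b₂ - a), neg_div]
      linarith
    · exact coordsign (cross (b₁ - a) (z - a)) (cross (b₁ - a) (v - a)) F hz1 hDF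
  have hw₁W : w₁ ∈ W := by
    rw [hW]
    exact ⟨1, 0, zero_le_one, le_refl 0, by module⟩
  have hw₂W : w₂ ∈ W := by
    rw [hW]
    exact ⟨0, 1, le_refl 0, zero_le_one, by module⟩
  have hv'W' := hv'W
  rw [hW] at hv'W'
  obtain ⟨s, t, hs, ht, hXeq⟩ := hv'W'
  -- coordinates
  set x₁ := cross (v' - a) (b₂ - a) / F with hx₁def
  set x₂ := cross (b₁ - a) (v' - a) / F with hx₂def
  set wa₁ := cross (w₁ - a) (b₂ - a) / F with hwa₁def
  set wa₂ := cross (b₁ - a) (w₁ - a) / F with hwa₂def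
  set wc₁ := cross (w₂ - a) (b₂ - a) / F with hwc₁def
  set wc₂ := cross (b₁ - a) (w₂ - a) / F with hwc₂def
  have hreprx : v' - a = x₁ • (b₁ - a) + x₂ • (b₂ - a) := cramer (b₁ - a) (b₂ - a) (v' - a) hFne
  have hreprw₁ : w₁ - a = wa₁ • (b₁ - a) + wa₂ • (b₂ - a) := cramer (b₁ - a) (b₂ - a) (w₁ - a) hFne
  have hreprw₂ : w₂ - a = wc₁ • (b₁ - a) + wc₂ • (b₂ - a) := cramer (b₁ - a) (b₂ - a) (w₂ - a) hFne
  have hx₁le : x₁ ≤ 0 := (quad v' hv'W).1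
  have hx₂le : x₂ ≤ 0 := (quad v' hv'W).2
  have hwa₁le : wa₁ ≤ 0 := (quad w₁ hw₁W).1
  have hwa₂le : wa₂ ≤ 0 := (quad w₁ hw₁W).2
  have hwc₁le : wc₁ ≤ 0 := (quad w₂ hw₂W).1
  have hwc₂le : wc₂ ≤ 0 := (quad w₂ hw₂W).2
  -- linearity
  have hxlin : v' - a = s • (w₁ - a) + t • (w₂ - a) := by rw [hXeq]; module
  have hx₁lin : x₁ = s * wa₁ + t * wc₁ := by
    rw [hx₁def, hwa₁def, hwc₁def, hxlin, cross_add_left, cross_smul_left, cross_smul_left]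
    ring
  have hx₂lin : x₂ = s * wa₂ + t * wc₂ := by
    rw [hx₂def, hwa₂def, hwc₂def, hxlin, cross_add_right, cross_smul_right', cross_smul_right']
    ring
  -- case x₁ = 0
  rcases eq_or_lt_of_le hx₁le with hx₁0 | hx₁neg
  · have hv'arepr : v' - a = x₂ • (b₂ - a) := by
      rw [hreprx, hx₁0, zero_smul, zero_add]
    have hb₂v' : b₂ - v' = (1 - x₂) • (b₂ - a) := by
      have h0 : b₂ - v' = (b₂ - a) - (v' - a) := by abel
      rw [h0, hv'arepr]; module
    have hx₂lt1 : (0:ℝ) < 1 - x₂ := by linarith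
    have hamem : a ∈ segment ℝ v' b₂ := by
      rw [segment_eq_image']
      refine ⟨-x₂ / (1 - x₂), ⟨div_nonneg (by linarith) (by linarith),
        by rw [div_le_one hx₂lt1]; linarith⟩, ?_⟩
      dsimp only
      rw [hb₂v', smul_smul, div_mul_cancel₀ _ (ne_of_gt hx₂lt1)]
      have h1 : v' + (-x₂) • (b₂ - a) = v' - x₂ • (b₂ - a) := by module
      rw [h1, ← hv'arepr]
      abel
    exact fun z hz => hv'b₂ (seg_sub_seg v' b₂ v' a (left_mem_segment ℝ v' b₂) hamem hz)
  -- case x₂ = 0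
  rcases eq_or_lt_of_le hx₂le with hx₂0 | hx₂neg
  · have hv'arepr : v' - a = x₁ • (b₁ - a) := by
      rw [hreprx, hx₂0, zero_smul, add_zero]
    have hb₁v' : b₁ - v' = (1 - x₁) • (b₁ - a) := by
      have h0 : b₁ - v' = (b₁ - a) - (v' - a) := by abel
      rw [h0, hv'arepr]; module
    have hx₁lt1 : (0:ℝ) < 1 - x₁ := by linarith
    have hamem : a ∈ segment ℝ v' b₁ := by
      rw [segment_eq_image']
      refine ⟨-x₁ / (1 - x₁), ⟨div_nonneg (by linarith) (by linarith),
        by rw [div_le_one hx₁lt1]; linarith⟩, ?_⟩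
      dsimp only
      rw [hb₁v', smul_smul, div_mul_cancel₀ _ (ne_of_gt hx₁lt1)]
      have h1 : v' + (-x₁) • (b₁ - a) = v' - x₁ • (b₁ - a) := by module
      rw [h1, ← hv'arepr]
      abel
    exact fun z hz => hv'b₁ (seg_sub_seg v' b₁ v' a (left_mem_segment ℝ v' b₁) hamem hz)
  -- both strictly negative
  set S₁ := x₁ * wa₂ - x₂ * wa₁ with hS₁def
  set S₂ := x₁ * wc₂ - x₂ * wc₁ with hS₂def
  have hlin : s * S₁ + t * S₂ = 0 := by
    rw [hS₁def, hS₂def]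
    linear_combination x₂ * hx₁lin - x₁ * hx₂lin
  rw [segment_symm]
  rcases eq_or_ne S₁ 0 with hS₁0 | hS₁ne
  · exact online_case P a v' w₁ b₁ b₂ (b₁ - a) (b₂ - a) x₁ x₂ wa₁ wa₂ hreprx hreprw₁ rfl rfl
      hx₁neg hx₂neg hwa₁le (by rw [← hS₁def]; exact hS₁0) hFne hw₁.1 hw₁.2.1 hw₁.2.2
      hv'b₁ hv'b₂ ha hv'C hw₁P
  rcases eq_or_ne S₂ 0 with hS₂0 | hS₂ne
  · exact online_case P a v' w₂ b₁ b₂ (b₁ - a) (b₂ - a) x₁ x₂ wc₁ wc₂ hreprx hreprw₂ rfl rfl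
      hx₁neg hx₂neg hwc₁le (by rw [← hS₂def]; exact hS₂0) hFne hw₂.1 hw₂.2.1 hw₂.2.2
      hv'b₁ hv'b₂ ha hv'C hw₂P
  -- main case : s, t > 0 and S₁ S₂ have opposite signs
  have hspos : 0 < s := by
    rcases eq_or_lt_of_le hs with h0 | h0
    · exfalso
      have ht0 : t * S₂ = 0 := by rw [← h0] at hlin; linarith
      rcases mul_eq_zero.mp ht0 with h | h
      · apply hv'a
        rw [hXeq, ← h0, h]
        module
      · exact hS₂ne h
    · exact h0
  have htpos : 0 < t := by
    rcases eq_or_lt_of_le ht with h0 | h0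
    · exfalso
      have hs0 : s * S₁ = 0 := by rw [← h0] at hlin; linarith
      rcases mul_eq_zero.mp hs0 with h | h
      · apply hv'a
        rw [hXeq, ← h0, h]
        module
      · exact hS₁ne h
    · exact h0
  have hswapF : cross (b₂ - a) (b₁ - a) ≠ 0 := by
    rw [cross_antisymm]
    simpa using hFne
  have hreprx' : v' - a = x₂ • (b₂ - a) + x₁ • (b₁ - a) := by rw [hreprx]; abel
  have hreprw₁' : w₁ - a = wa₂ • (b₂ - a) + wa₁ • (b₁ - a) := by rw [hreprw₁]; abel
  have hreprw₂' : w₂ - a = wc₂ • (b₂ - a) + wc₁ • (b₁ - a) := by rw [hreprw₂]; abel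
  rcases lt_or_gt_of_ne hS₁ne with hS₁neg | hS₁pos
  · -- S₁ < 0, S₂ > 0 : side A from w₂ (towards b₁), side B from w₁ (towards b₂)
    have hS₂pos : 0 < S₂ := by nlinarith
    obtain ⟨TA, pA, SpA, hbA, hfA, hHA, hSpA, hcrA⟩ :=
      side_cover P a (b₁ - a) (b₂ - a) v' w₂ b₁ x₁ x₂ wc₁ wc₂ hreprx hreprw₂ rfl hx₂neg hwc₂le
        (by rw [← hS₂def] at *; linarith) hFne (by rw [segment_symm]; exact hw₂.1)
        hw₂.2.1 hv'b₁ ha hv'C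
    obtain ⟨TB, pB, SpB, hbB, hfB, hHB, hSpB, hcrB⟩ :=
      side_cover P a (b₂ - a) (b₁ - a) v' w₁ b₂ x₂ x₁ wa₂ wa₁ hreprx' hreprw₁' rfl hx₁neg hwa₁le
        (by nlinarith) hswapF (by rw [segment_symm]; exact hw₁.1)
        hw₁.2.2 hv'b₂ ha hv'C
    apply final_assembly P a v' pA pB TA TB hbA hbB hfA hfB hHA hHB _ ha hv'C
    rw [hcrA, hcrB, cross_antisymm (b₂ - a) (b₁ - a), ← hFdef]
    have h0 : SpA * F * (SpB * -F) = -(SpA * SpB * F ^ 2) := by ring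
    rw [h0]
    have := mul_pos (mul_pos hSpA hSpB) hF2
    linarith
  · -- S₁ > 0, S₂ < 0 : side A from w₁ (towards b₁), side B from w₂ (towards b₂)
    have hS₂neg : S₂ < 0 := by nlinarith
    obtain ⟨TA, pA, SpA, hbA, hfA, hHA, hSpA, hcrA⟩ :=
      side_cover P a (b₁ - a) (b₂ - a) v' w₁ b₁ x₁ x₂ wa₁ wa₂ hreprx hreprw₁ rfl hx₂neg hwa₂le
        (by rw [← hS₁def] at *; linarith) hFne (by rw [segment_symm]; exact hw₁.1)
        hw₁.2.1 hv'b₁ ha hv'C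
    obtain ⟨TB, pB, SpB, hbB, hfB, hHB, hSpB, hcrB⟩ :=
      side_cover P a (b₂ - a) (b₁ - a) v' w₂ b₂ x₂ x₁ wc₂ wc₁ hreprx' hreprw₂' rfl hx₁neg hwc₁le
        (by nlinarith) hswapF (by rw [segment_symm]; exact hw₂.1)
        hw₂.2.2 hv'b₂ ha hv'C
    apply final_assembly P a v' pA pB TA TB hbA hbB hfA hfB hHA hHB _ ha hv'C
    rw [hcrA, hcrB, cross_antisymm (b₂ - a) (b₁ - a), ← hFdef]
    have h0 : SpA * F * (SpB * -F) = -(SpA * SpB * F ^ 2) := by ring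
    rw [h0]
    have := mul_pos (mul_pos hSpA hSpB) hF2
    linarith
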